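/- Let V ⊆ 𝒜 and let M=(S,R,L,s_0) and M'=(S',R',L',s_0') be initial structures. Then (M',s_0') ⊨ F_V(M,s_0) if and only if (M,s_0) ↔_{𝒜∖V} (M',s_0'), where F_V(M,s_0) is the characterizing formula of the initial K-structure (M,s_0) on V. -/
import Mathlib


universe u

/-- A Kripke structure over a set of atoms: a finite nonempty set of states,
a serial transition relation, and a labeling function. -/
structure Kripke (Atom : Type u) where
  State : Type u
  stateFinite : Finite State
  stateNonempty : Nonempty State
  R : State → State → Prop
  serial : ∀ s, ∃ t, R s t
  L : State → Set Atom

instance {Atom : Type u} (M : Kripke Atom) : Finite M.State := M.stateFinite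

/-- A K-structure: a Kripke structure together with one of its states. -/
structure KStruct (Atom : Type u) where
  M : Kripke Atom
  s : M.State

/-- An initial structure: a Kripke structure with an initial state `s0`,
i.e. a state admitting a path visiting every state. -/
structure InitKripke (Atom : Type u) extends Kripke Atom where
  s0 : State
  initial : ∃ π : ℕ → State, π 0 = s0 ∧ (∀ n, R (π n) (π (n + 1))) ∧ ∀ t, ∃ n, π n = t

/-- The (initial) K-structure associated to an initial structure. -/
def InitKripke.toKS {Atom : Type u} (M : InitKripke Atom) : KStruct Atom :=
  ⟨M.toKripke, M.s0⟩

/-- The approximations `B_n^V` of `V`-bisimilarity on K-structures. -/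
def BRel {Atom : Type u} (V : Set Atom) : ℕ → KStruct Atom → KStruct Atom → Prop
  | 0 => fun K1 K2 => K1.M.L K1.s \ V = K2.M.L K2.s \ V
  | n + 1 => fun K1 K2 =>
      K1.M.L K1.s \ V = K2.M.L K2.s \ V ∧
      (∀ t1, K1.M.R K1.s t1 → ∃ t2, K2.M.R K2.s t2 ∧ BRel V n ⟨K1.M, t1⟩ ⟨K2.M, t2⟩) ∧
      (∀ t2, K2.M.R K2.s t2 → ∃ t1, K1.M.R K1.s t1 ∧ BRel V n ⟨K1.M, t1⟩ ⟨K2.M, t2⟩)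

/-- `V`-bisimilarity `K1 ↔_V K2` of K-structures. -/
def VBisim {Atom : Type u} (V : Set Atom) (K1 K2 : KStruct Atom) : Prop :=
  ∀ n, BRel V n K1 K2

/-- CTL formulas in existential normal form. -/
inductive CTL (Atom : Type u) : Type u
  | bot  : CTL Atom
  | top  : CTL Atom
  | atom (p : Atom) : CTL Atom
  | neg  (φ : CTL Atom) : CTL Atom
  | or   (φ ψ : CTL Atom) : CTL Atom
  | EX   (φ : CTL Atom) : CTL Atom
  | EG   (φ : CTL Atom) : CTL Atom
  | EU   (φ ψ : CTL Atom) : CTL Atom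

namespace CTL
variable {Atom : Type u}

def and (φ ψ : CTL Atom) : CTL Atom := .neg (.or (.neg φ) (.neg ψ))
def imp (φ ψ : CTL Atom) : CTL Atom := .or (.neg φ) ψ
def iff (φ ψ : CTL Atom) : CTL Atom := (φ.imp ψ).and (ψ.imp φ)
def AX (φ : CTL Atom) : CTL Atom := .neg (.EX (.neg φ))
def EF (φ : CTL Atom) : CTL Atom := .EU .top φ
def AF (φ : CTL Atom) : CTL Atom := .neg (.EG (.neg φ))
def AG (φ : CTL Atom) : CTL Atom := .neg (.EU .top (.neg φ))

/-- The set of atoms occurring in a formula. -/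
def vars : CTL Atom → Set Atom
  | .bot => ∅
  | .top => ∅
  | .atom p => {p}
  | .neg φ => vars φ
  | .or φ ψ => vars φ ∪ vars ψ
  | .EX φ => vars φ
  | .EG φ => vars φ
  | .EU φ ψ => vars φ ∪ vars ψ

end CTL

/-- The standard CTL satisfaction relation `(M,s) ⊨ φ`. -/
def Sat {Atom : Type u} (M : Kripke Atom) : CTL Atom → M.State → Prop
  | .bot => fun _ => False
  | .top => fun _ => True
  | .atom p => fun s => p ∈ M.L s
  | .neg φ => fun s => ¬ Sat M φ s
  | .or φ ψ => fun s => Sat M φ s ∨ Sat M ψ s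
  | .EX φ => fun s => ∃ t, M.R s t ∧ Sat M φ t
  | .EG φ => fun s => ∃ π : ℕ → M.State, π 0 = s ∧ (∀ n, M.R (π n) (π (n + 1))) ∧
      ∀ n, Sat M φ (π n)
  | .EU φ ψ => fun s => ∃ π : ℕ → M.State, π 0 = s ∧ (∀ n, M.R (π n) (π (n + 1))) ∧
      ∃ i, Sat M ψ (π i) ∧ ∀ j < i, Sat M φ (π j)

/-- Satisfaction for K-structures. -/
def KSat {Atom : Type u} (K : KStruct Atom) (φ : CTL Atom) : Prop := Sat K.M φ K.s

/-- The set of models (initial K-structures) of a formula. -/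
def CTLMod {Atom : Type u} (φ : CTL Atom) : Set (InitKripke Atom) :=
  {M | Sat M.toKripke φ M.s0}

def Entails {Atom : Type u} (φ ψ : CTL Atom) : Prop := CTLMod φ ⊆ CTLMod ψ

def CTLEquiv {Atom : Type u} (φ ψ : CTL Atom) : Prop := CTLMod φ = CTLMod ψ

/-- `IR φ V`: φ is irrelevant to the atoms in V. -/
def IR {Atom : Type u} (φ : CTL Atom) (V : Set Atom) : Prop :=
  ∃ ψ : CTL Atom, CTL.vars ψ ∩ V = ∅ ∧ CTLEquiv φ ψ

/-- `V`-bisimilarity of depth-`n` computation trees rooted at `s1` (in `M1`) and `s2` (in `M2`). -/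
def TreeBisim {Atom : Type u} (V : Set Atom) (M1 M2 : Kripke Atom) :
    ℕ → M1.State → M2.State → Prop
  | 0 => fun s1 s2 => M1.L s1 \ V = M2.L s2 \ V
  | n + 1 => fun s1 s2 =>
      M1.L s1 \ V = M2.L s2 \ V ∧
      (∀ t1, M1.R s1 t1 → ∃ t2, M2.R s2 t2 ∧ TreeBisim V M1 M2 n t1 t2) ∧
      (∀ t2, M2.R s2 t2 → ∃ t1, M1.R s1 t1 ∧ TreeBisim V M1 M2 n t1 t2)

/-- Finite conjunction of a list of formulas. -/
def andList {Atom : Type u} : List (CTL Atom) → CTL Atom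
  | [] => .top
  | φ :: l => φ.and (andList l)

/-- Finite disjunction of a list of formulas. -/
def orList {Atom : Type u} : List (CTL Atom) → CTL Atom
  | [] => .bot
  | φ :: l => .or φ (orList l)

/-- A list enumerating a subset of a finite type. -/
noncomputable def setToList {α : Type u} [Finite α] (s : Set α) : List α :=
  s.toFinite.toFinset.toList

/-- The list of `R`-successors of a state. -/
noncomputable def Kripke.succList {Atom : Type u} (M : Kripke Atom) (s : M.State) :
    List M.State :=
  setToList {t | M.R s t}

/-- The characterizing formula `F_V(Tr_0(s))` of the depth-0 computation tree. -/
noncomputable def charTree0 {Atom : Type u} [Finite Atom] (M : Kripke Atom) (V : Set Atom)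
    (s : M.State) : CTL Atom :=
  (andList ((setToList (V ∩ M.L s)).map CTL.atom)).and
    (andList ((setToList (V \ M.L s)).map fun q => CTL.neg (CTL.atom q)))

/-- The characterizing formula `F_V(Tr_n(s))` of the depth-`n` computation tree of `s`. -/
noncomputable def charTree {Atom : Type u} [Finite Atom] (M : Kripke Atom) (V : Set Atom) :
    ℕ → M.State → CTL Atom
  | 0 => fun s => charTree0 M V s
  | k + 1 => fun s =>
      (andList ((M.succList s).map fun t => CTL.EX (charTree M V k t))).and
        ((CTL.AX (orList ((M.succList s).map (charTree M V k)))).and (charTree0 M V s))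

/-- `dis_V(M,s,s',k)`: `s` and `s'` are `V`-distinguishable, and `k` is the least depth at which
their computation trees fail to be `(𝒜∖V)`-bisimilar. -/
def dis {Atom : Type u} (M : Kripke Atom) (V : Set Atom) (s s' : M.State) (k : ℕ) : Prop :=
  ¬ VBisim Vᶜ ⟨M, s⟩ ⟨M, s'⟩ ∧
  IsLeast {n | ¬ TreeBisim Vᶜ M M n s s'} k

/-- The characterization number `ch(M,V)`. -/
noncomputable def ch {Atom : Type u} (M : Kripke Atom) (V : Set Atom) : ℕ :=
  letI := Classical.dec (∃ s s' k, dis M V s s' k)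
  if ∃ s s' k, dis M V s s' k then
    sSup {k | ∃ s s', dis M V s s' k}
  else
    sInf {k | (fun s s' : M.State => BRel Vᶜ k ⟨M, s⟩ ⟨M, s'⟩) =
              (fun s s' : M.State => BRel Vᶜ (k + 1) ⟨M, s⟩ ⟨M, s'⟩)}

/-- The characterizing formula `F_V(M,s0)` of an initial K-structure on `V`. -/
noncomputable def charForm {Atom : Type u} [Finite Atom] (M : InitKripke Atom) (V : Set Atom) :
    CTL Atom :=
  let T : M.State → CTL Atom := fun s => charTree M.toKripke V (ch M.toKripke V) s
  (T M.s0).and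
    (andList ((setToList (Set.univ : Set M.State)).map fun s =>
      CTL.AG ((T s).imp
        ((andList ((M.toKripke.succList s).map fun t => CTL.EX (T t))).and
          (CTL.AX (orList ((M.toKripke.succList s).map T)))))))

/-- `ψ` is a result of forgetting `V` from `φ`. -/
def IsForget {Atom : Type u} (φ : CTL Atom) (V : Set Atom) (ψ : CTL Atom) : Prop :=
  CTL.vars ψ ∩ V = ∅ ∧
  CTLMod ψ = {K : InitKripke Atom | ∃ K' ∈ CTLMod φ, VBisim V K'.toKS K.toKS}

/-! ### Auxiliary lemmas -/

section Aux
variable {Atom : Type u}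

theorem sat_and {M : Kripke Atom} {φ ψ : CTL Atom} {s : M.State} :
    Sat M (φ.and ψ) s ↔ Sat M φ s ∧ Sat M ψ s := by
  simp only [CTL.and, Sat]; tauto

theorem sat_imp {M : Kripke Atom} {φ ψ : CTL Atom} {s : M.State} :
    Sat M (φ.imp ψ) s ↔ (Sat M φ s → Sat M ψ s) := by
  simp only [CTL.imp, Sat]; tauto

theorem sat_AX {M : Kripke Atom} {φ : CTL Atom} {s : M.State} :
    Sat M (CTL.AX φ) s ↔ ∀ t, M.R s t → Sat M φ t := by
  simp only [CTL.AX, Sat]; push_neg; rfl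

theorem sat_andList {M : Kripke Atom} {l : List (CTL Atom)} {s : M.State} :
    Sat M (andList l) s ↔ ∀ φ ∈ l, Sat M φ s := by
  induction l with
  | nil => simp [andList, Sat]
  | cons φ l ih => simp [andList, sat_and, ih]

theorem sat_orList {M : Kripke Atom} {l : List (CTL Atom)} {s : M.State} :
    Sat M (orList l) s ↔ ∃ φ ∈ l, Sat M φ s := by
  induction l with
  | nil => simp [orList, Sat]
  | cons φ l ih => simp [orList, Sat, ih]

theorem mem_setToList {α : Type u} [Finite α] {s : Set α} {a : α} :
    a ∈ setToList s ↔ a ∈ s := by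
  simp [setToList]

theorem mem_succList {M : Kripke Atom} {s t : M.State} :
    t ∈ M.succList s ↔ M.R s t := by
  simp [Kripke.succList, mem_setToList]

/-- An infinite path extension by seriality. -/
noncomputable def Kripke.ext (M : Kripke Atom) (s : M.State) : ℕ → M.State
  | 0 => s
  | n + 1 => (M.serial (Kripke.ext M s n)).choose

theorem Kripke.ext_step (M : Kripke Atom) (s : M.State) (n : ℕ) :
    M.R (M.ext s n) (M.ext s (n + 1)) :=
  (M.serial (M.ext s n)).choose_spec

theorem path_through {M : Kripke Atom} {s t : M.State}
    (h : Relation.ReflTransGen M.R s t) :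
    ∃ π : ℕ → M.State, π 0 = s ∧ (∀ n, M.R (π n) (π (n + 1))) ∧ ∃ i, π i = t := by
  induction h using Relation.ReflTransGen.head_induction_on with
  | refl => exact ⟨M.ext t, rfl, M.ext_step t, 0, rfl⟩
  | @head a c hab _ ih =>
    obtain ⟨π, h0, hstep, i, hi⟩ := ih
    refine ⟨fun n => Nat.rec a (fun m _ => π m) n, rfl, ?_, i + 1, hi⟩
    intro n
    cases n with
    | zero => simpa [h0] using hab
    | succ m => exact hstep m

theorem path_reachable {M : Kripke Atom} {π : ℕ → M.State} {s : M.State}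
    (h0 : π 0 = s) (hstep : ∀ n, M.R (π n) (π (n + 1))) (n : ℕ) :
    Relation.ReflTransGen M.R s (π n) := by
  induction n with
  | zero => rw [h0]
  | succ m ih => exact Relation.ReflTransGen.tail ih (hstep m)

theorem sat_AG {M : Kripke Atom} {φ : CTL Atom} {s : M.State} :
    Sat M (CTL.AG φ) s ↔ ∀ t, Relation.ReflTransGen M.R s t → Sat M φ t := by
  simp only [CTL.AG, Sat]
  constructor
  · intro h t hreach
    by_contra hnot
    obtain ⟨π, h0, hstep, i, hi⟩ := path_through hreach
    exact h ⟨π, h0, hstep, i, by rwa [hi], fun j _ => trivial⟩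
  · rintro h ⟨π, h0, hstep, i, hnot, -⟩
    exact hnot (h _ (path_reachable h0 hstep i))

/-! ### Tree bisimulation lemmas -/

theorem treeBisim_labels {V : Set Atom} {M1 M2 : Kripke Atom} {n : ℕ}
    {s : M1.State} {t : M2.State} (h : TreeBisim V M1 M2 n s t) :
    M1.L s \ V = M2.L t \ V := by
  cases n with
  | zero => exact h
  | succ m => exact h.1

theorem treeBisim_succ {V : Set Atom} {M1 M2 : Kripke Atom} :
    ∀ {n : ℕ} {s : M1.State} {t : M2.State},
      TreeBisim V M1 M2 (n + 1) s t → TreeBisim V M1 M2 n s t := by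
  intro n
  induction n with
  | zero => intro s t h; exact h.1
  | succ m ih =>
    intro s t h
    refine ⟨h.1, fun t1 h1 => ?_, fun t2 h2 => ?_⟩
    · obtain ⟨t2, h2, hb⟩ := h.2.1 t1 h1
      exact ⟨t2, h2, ih hb⟩
    · obtain ⟨t1, h1, hb⟩ := h.2.2 t2 h2
      exact ⟨t1, h1, ih hb⟩

theorem treeBisim_mono {V : Set Atom} {M1 M2 : Kripke Atom} {m n : ℕ}
    (hmn : m ≤ n) {s : M1.State} {t : M2.State}
    (h : TreeBisim V M1 M2 n s t) : TreeBisim V M1 M2 m s t := by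
  obtain ⟨d, rfl⟩ := Nat.exists_eq_add_of_le hmn
  clear hmn
  induction d with
  | zero => exact h
  | succ k ih => exact ih (treeBisim_succ h)

theorem treeBisim_symm {V : Set Atom} {M1 M2 : Kripke Atom} :
    ∀ {n : ℕ} {s : M1.State} {t : M2.State},
      TreeBisim V M1 M2 n s t → TreeBisim V M2 M1 n t s := by
  intro n
  induction n with
  | zero => intro s t h; exact h.symm
  | succ m ih =>
    rintro s t ⟨hl, hf, hb⟩
    refine ⟨hl.symm, fun t2 h2 => ?_, fun t1 h1 => ?_⟩
    · obtain ⟨t1, h1, hbb⟩ := hb t2 h2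
      exact ⟨t1, h1, ih hbb⟩
    · obtain ⟨t2, h2, hbb⟩ := hf t1 h1
      exact ⟨t2, h2, ih hbb⟩

theorem treeBisim_trans {V : Set Atom} {M1 M2 M3 : Kripke Atom} :
    ∀ {n : ℕ} {s : M1.State} {t : M2.State} {u : M3.State},
      TreeBisim V M1 M2 n s t → TreeBisim V M2 M3 n t u → TreeBisim V M1 M3 n s u := by
  intro n
  induction n with
  | zero => intro s t u h1 h2; exact h1.trans h2
  | succ m ih =>
    rintro s t u ⟨hl1, hf1, hb1⟩ ⟨hl2, hf2, hb2⟩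
    refine ⟨hl1.trans hl2, fun s' hs' => ?_, fun u' hu' => ?_⟩
    · obtain ⟨t', ht', hx⟩ := hf1 s' hs'
      obtain ⟨u', hu', hy⟩ := hf2 t' ht'
      exact ⟨u', hu', ih hx hy⟩
    · obtain ⟨t', ht', hy⟩ := hb2 u' hu'
      obtain ⟨s', hs', hx⟩ := hb1 t' ht'
      exact ⟨s', hs', ih hx hy⟩

theorem brel_iff_treeBisim {V : Set Atom} {M1 M2 : Kripke Atom} :
    ∀ {n : ℕ} {s : M1.State} {t : M2.State},
      BRel V n ⟨M1, s⟩ ⟨M2, t⟩ ↔ TreeBisim V M1 M2 n s t := by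
  intro n
  induction n with
  | zero => intro s t; rfl
  | succ m ih =>
    intro s t
    simp only [BRel, TreeBisim, ih]

/-! ### Characterizing tree formulas -/

theorem sat_charTree0 [Finite Atom] {M M' : Kripke Atom} {V : Set Atom}
    {s : M.State} {t : M'.State} :
    Sat M' (charTree0 M V s) t ↔ M.L s \ Vᶜ = M'.L t \ Vᶜ := by
  simp only [charTree0, sat_and, sat_andList, List.mem_map, mem_setToList]
  constructor
  · rintro ⟨h1, h2⟩
    ext x
    simp only [Set.mem_diff, Set.mem_compl_iff, not_not]
    constructor
    · rintro ⟨hx, hv⟩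
      refine ⟨?_, hv⟩
      have := h1 (CTL.atom x) ⟨x, ⟨hv, hx⟩, rfl⟩
      simpa [Sat] using this
    · rintro ⟨hx, hv⟩
      refine ⟨?_, hv⟩
      by_contra hns
      have := h2 (CTL.neg (CTL.atom x)) ⟨x, ⟨hv, hns⟩, rfl⟩
      simp only [Sat] at this
      exact this hx
  · intro h
    have key : ∀ x, x ∈ V → (x ∈ M.L s ↔ x ∈ M'.L t) := by
      intro x hv
      constructor
      · intro hx
        have : x ∈ M.L s \ Vᶜ := ⟨hx, by simpa using hv⟩
        rw [h] at this; exact this.1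
      · intro hx
        have : x ∈ M'.L t \ Vᶜ := ⟨hx, by simpa using hv⟩
        rw [← h] at this; exact this.1
    constructor
    · rintro φ ⟨x, ⟨hv, hx⟩, rfl⟩
      simpa [Sat] using (key x hv).1 hx
    · rintro φ ⟨x, ⟨hv, hx⟩, rfl⟩
      simp only [Sat]
      intro hc
      exact hx ((key x hv).2 hc)

theorem sat_charTree [Finite Atom] {M M' : Kripke Atom} {V : Set Atom} :
    ∀ {n : ℕ} {s : M.State} {t : M'.State},
      Sat M' (charTree M V n s) t ↔ TreeBisim Vᶜ M M' n s t := by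
  intro n
  induction n with
  | zero => intro s t; exact sat_charTree0
  | succ m ih =>
    intro s t
    simp only [charTree, sat_and, sat_andList, sat_AX, sat_orList, List.mem_map,
      mem_succList, sat_charTree0]
    constructor
    · rintro ⟨h1, h2, h3⟩
      refine ⟨h3, fun s' hs' => ?_, fun t' ht' => ?_⟩
      · have := h1 _ ⟨s', hs', rfl⟩
        simp only [Sat] at this
        obtain ⟨t', ht', hsat⟩ := this
        exact ⟨t', ht', ih.mp hsat⟩
      · obtain ⟨φ, ⟨s', hs', rfl⟩, hsat⟩ := h2 t' ht'
        exact ⟨s', hs', ih.mp hsat⟩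
    · rintro ⟨hl, hf, hb⟩
      refine ⟨?_, ?_, hl⟩
      · rintro φ ⟨s', hs', rfl⟩
        obtain ⟨t', ht', hbis⟩ := hf s' hs'
        exact ⟨t', ht', ih.mpr hbis⟩
      · intro t' ht'
        obtain ⟨s', hs', hbis⟩ := hb t' ht'
        exact ⟨charTree M V m s', ⟨s', hs', rfl⟩, ih.mpr hbis⟩

/-! ### VBisim lemmas -/

theorem brel_mono {V : Set Atom} {K1 K2 : KStruct Atom} {m n : ℕ} (hmn : m ≤ n)
    (h : BRel V n K1 K2) : BRel V m K1 K2 := by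
  obtain ⟨M1, s⟩ := K1; obtain ⟨M2, t⟩ := K2
  rw [brel_iff_treeBisim] at h ⊢
  exact treeBisim_mono hmn h

theorem not_vbisim_iff {V : Set Atom} {K1 K2 : KStruct Atom} :
    ¬ VBisim V K1 K2 ↔ ∃ n, ¬ BRel V n K1 K2 := by
  simp [VBisim]

theorem vbisim_symm {V : Set Atom} {K1 K2 : KStruct Atom}
    (h : VBisim V K1 K2) : VBisim V K2 K1 := by
  intro n
  have := h n
  obtain ⟨M1, s⟩ := K1; obtain ⟨M2, t⟩ := K2
  rw [brel_iff_treeBisim] at this ⊢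
  exact treeBisim_symm this

theorem vbisim_trans {V : Set Atom} {K1 K2 K3 : KStruct Atom}
    (h1 : VBisim V K1 K2) (h2 : VBisim V K2 K3) : VBisim V K1 K3 := by
  intro n
  have t1 := h1 n; have t2 := h2 n
  obtain ⟨M1, s⟩ := K1; obtain ⟨M2, t⟩ := K2; obtain ⟨M3, u⟩ := K3
  rw [brel_iff_treeBisim] at t1 t2 ⊢
  exact treeBisim_trans t1 t2

/-- VBisim is itself a bisimulation (forth direction uses finiteness). -/
theorem vbisim_forth {V : Set Atom} {M1 M2 : Kripke Atom} {s : M1.State} {t : M2.State}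
    (h : VBisim V ⟨M1, s⟩ ⟨M2, t⟩) {s' : M1.State} (hs' : M1.R s s') :
    ∃ t', M2.R t t' ∧ VBisim V ⟨M1, s'⟩ ⟨M2, t'⟩ := by
  by_contra hc
  push_neg at hc
  have hex : ∀ t', M2.R t t' → ∃ n, ¬ BRel V n ⟨M1, s'⟩ ⟨M2, t'⟩ := by
    intro t' ht'
    exact not_vbisim_iff.mp (hc t' ht')
  classical
  have := Fintype.ofFinite M2.State
  let f : M2.State → ℕ := fun t' =>
    if h : ∃ n, ¬ BRel V n ⟨M1, s'⟩ ⟨M2, t'⟩ then h.choose else 0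
  let N := Finset.univ.sup f
  have hN := h (N + 1)
  obtain ⟨t', ht', hb⟩ := hN.2.1 s' hs'
  have hfex := hex t' ht'
  have hnb : ¬ BRel V (f t') ⟨M1, s'⟩ ⟨M2, t'⟩ := by
    simp only [f, dif_pos hfex]
    exact hfex.choose_spec
  exact hnb (brel_mono (Finset.le_sup (Finset.mem_univ t')) hb)

theorem vbisim_back {V : Set Atom} {M1 M2 : Kripke Atom} {s : M1.State} {t : M2.State}
    (h : VBisim V ⟨M1, s⟩ ⟨M2, t⟩) {t' : M2.State} (ht' : M2.R t t') :
    ∃ s', M1.R s s' ∧ VBisim V ⟨M1, s'⟩ ⟨M2, t'⟩ := by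
  obtain ⟨s', hs', hb⟩ := vbisim_forth (vbisim_symm h) ht'
  exact ⟨s', hs', vbisim_symm hb⟩

theorem vbisim_reach {V : Set Atom} {M1 M2 : Kripke Atom} {s : M1.State} {t : M2.State}
    (h : VBisim V ⟨M1, s⟩ ⟨M2, t⟩) {t' : M2.State}
    (hr : Relation.ReflTransGen M2.R t t') :
    ∃ s', VBisim V ⟨M1, s'⟩ ⟨M2, t'⟩ := by
  induction hr with
  | refl => exact ⟨s, h⟩
  | tail _ hstep ih =>
    obtain ⟨u, hu⟩ := ih
    obtain ⟨u', _, hu'⟩ := vbisim_back hu hstep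
    exact ⟨u', hu'⟩

/-! ### The characterization number -/

theorem exists_dis_of_not_vbisim {M : Kripke Atom} {V : Set Atom} {s s' : M.State}
    (h : ¬ VBisim Vᶜ ⟨M, s⟩ ⟨M, s'⟩) : ∃ k, dis M V s s' k := by
  have hne : {n | ¬ TreeBisim Vᶜ M M n s s'}.Nonempty := by
    obtain ⟨n, hn⟩ := not_vbisim_iff.mp h
    rw [brel_iff_treeBisim] at hn
    exact ⟨n, hn⟩
  exact ⟨sInf _, h, Nat.sInf_mem hne, fun n hn => Nat.sInf_le hn⟩

theorem dis_bddAbove (M : Kripke Atom) (V : Set Atom) :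
    BddAbove {k | ∃ s s', dis M V s s' k} := by
  have := Fintype.ofFinite M.State
  have hsub : {k | ∃ s s', dis M V s s' k} ⊆
      (fun p : M.State × M.State => sInf {n | ¬ TreeBisim Vᶜ M M n p.1 p.2}) ''
        Set.univ := by
    rintro k ⟨s, s', hne, hle⟩
    exact ⟨(s, s'), Set.mem_univ _, hle.csInf_eq⟩
  exact (Set.Finite.image _ Set.finite_univ).subset hsub |>.bddAbove

/-- Key lemma: tree bisimilarity of depth `ch M V` within `M` implies full bisimilarity. -/
theorem key_ch {M : Kripke Atom} {V : Set Atom} {s u : M.State}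
    (h : TreeBisim Vᶜ M M (ch M V) s u) : VBisim Vᶜ ⟨M, s⟩ ⟨M, u⟩ := by
  classical
  by_cases hd : ∃ s s' k, dis M V s s' k
  · by_contra hnb
    obtain ⟨k, hk⟩ := exists_dis_of_not_vbisim hnb
    have hkc : k ≤ ch M V := by
      rw [ch]
      rw [if_pos hd]
      exact le_csSup (dis_bddAbove M V) ⟨s, u, hk⟩
    exact hk.2.1 (treeBisim_mono hkc h)
  · by_contra hnb
    obtain ⟨k, hk⟩ := exists_dis_of_not_vbisim hnb
    exact hd ⟨s, u, k, hk⟩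

end Aux

/-- `(M',s_0') ⊨ F_V(M,s_0)` iff `(M,s_0) ↔_{𝒜∖V} (M',s_0')`. -/
theorem sat_charForm_iff_vbisim {Atom : Type u} [Finite Atom] (V : Set Atom)
    (M M' : InitKripke Atom) :
    Sat M'.toKripke (charForm M V) M'.s0 ↔ VBisim Vᶜ M.toKS M'.toKS := by
  set c := ch M.toKripke V with hc
  set T : M.State → CTL Atom := fun s => charTree M.toKripke V c s with hT
  have hform : charForm M V = (T M.s0).and
      (andList ((setToList (Set.univ : Set M.State)).map fun s =>
        CTL.AG ((T s).imp
          ((andList ((M.toKripke.succList s).map fun t => CTL.EX (T t))).and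
            (CTL.AX (orList ((M.toKripke.succList s).map T))))))) := rfl
  rw [hform, sat_and]
  constructor
  · rintro ⟨h1, h2⟩
    rw [sat_andList] at h2
    have hAG : ∀ (s : M.State) (t' : M'.State),
        Relation.ReflTransGen M'.toKripke.R M'.s0 t' →
        Sat M'.toKripke (T s) t' →
        Sat M'.toKripke
          ((andList ((M.toKripke.succList s).map fun t => CTL.EX (T t))).and
            (CTL.AX (orList ((M.toKripke.succList s).map T)))) t' := by
      intro s t' hreach hTs
      have := h2 _ (List.mem_map.mpr ⟨s, mem_setToList.mpr (Set.mem_univ s), rfl⟩)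
      rw [sat_AG] at this
      exact sat_imp.mp (this t' hreach) hTs
    have main : ∀ (n : ℕ) (s : M.State) (t' : M'.State),
        Relation.ReflTransGen M'.toKripke.R M'.s0 t' →
        Sat M'.toKripke (T s) t' →
        BRel Vᶜ n ⟨M.toKripke, s⟩ ⟨M'.toKripke, t'⟩ := by
      intro n
      induction n with
      | zero =>
        intro s t' _ hTs
        exact treeBisim_labels (sat_charTree.mp hTs)
      | succ m ih =>
        intro s t' hreach hTs
        obtain ⟨hEX, hAX⟩ := sat_and.mp (hAG s t' hreach hTs)
        rw [sat_andList] at hEX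
        rw [sat_AX] at hAX
        refine ⟨treeBisim_labels (sat_charTree.mp hTs), ?_, ?_⟩
        · intro s1 hs1
          have := hEX _ (List.mem_map.mpr ⟨s1, mem_succList.mpr hs1, rfl⟩)
          obtain ⟨v, hv, hTv⟩ := this
          exact ⟨v, hv, ih s1 v (hreach.tail hv) hTv⟩
        · intro v hv
          obtain ⟨φ, hφ, hsat⟩ := sat_orList.mp (hAX v hv)
          obtain ⟨s1, hs1, rfl⟩ := List.mem_map.mp hφ
          exact ⟨s1, mem_succList.mp hs1, ih s1 v (hreach.tail hv) hsat⟩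
    intro n
    exact main n M.s0 M'.s0 Relation.ReflTransGen.refl h1
  · intro h
    constructor
    · exact sat_charTree.mpr (brel_iff_treeBisim.mp (h c))
    · rw [sat_andList]
      rintro φ hφ
      obtain ⟨s, -, rfl⟩ := List.mem_map.mp hφ
      rw [sat_AG]
      intro t' hreach
      rw [sat_imp]
      intro hTst'
      have hb1 : TreeBisim Vᶜ M.toKripke M'.toKripke c s t' := sat_charTree.mp hTst'
      obtain ⟨u, hu⟩ := vbisim_reach h hreach
      have hut' : TreeBisim Vᶜ M.toKripke M'.toKripke c u t' :=
        brel_iff_treeBisim.mp (hu c)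
      have hsu : TreeBisim Vᶜ M.toKripke M.toKripke c s u :=
        treeBisim_trans hb1 (treeBisim_symm hut')
      have hv : VBisim Vᶜ ⟨M.toKripke, s⟩ ⟨M.toKripke, u⟩ := key_ch hsu
      have hst' : VBisim Vᶜ ⟨M.toKripke, s⟩ ⟨M'.toKripke, t'⟩ := vbisim_trans hv hu
      have hstep : TreeBisim Vᶜ M.toKripke M'.toKripke (c + 1) s t' :=
        brel_iff_treeBisim.mp (hst' (c + 1))
      rw [sat_and]
      constructor
      · rw [sat_andList]
        rintro ψ hψ
        obtain ⟨s1, hs1, rfl⟩ := List.mem_map.mp hψ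
        obtain ⟨v, hvR, hbv⟩ := hstep.2.1 s1 (mem_succList.mp hs1)
        exact ⟨v, hvR, sat_charTree.mpr hbv⟩
      · rw [sat_AX]
        intro v hvR
        rw [sat_orList]
        obtain ⟨s1, hs1, hbv⟩ := hstep.2.2 v hvR
        exact ⟨T s1, List.mem_map.mpr ⟨s1, mem_succList.mpr hs1, rfl⟩,
          sat_charTree.mpr hbv⟩
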